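/- Let n be a positive integer and let S_1, S_2, … be a sequence of subsets of [n]. Starting from F_0 = the path tree 1̂ ∈ F_ord(n) (the ordered tree in which vertex t+1 is the unique child of vertex t for each t < n), define F_t from F_{t−1} by operating on the vertices of S_t one at a time in increasing order of label. For each vertex i, let h_i = min{t : i ∈ S_t}. Suppose 1 ≤ k < l ≤ n are such that h_l is finite, h_k > h_l, and h_l ≥ h_i for every i with k < i < l. Then in F_{h_l}, vertex l is a child of vertex k. -/

import Mathlib

open scoped Classical

noncomputable section

/-- An ordered forest on `n` vertices, with vertices identified with their labels `1, …, n`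
under left-to-right preorder traversal, encoded by its parent function: `par i` is the
parent of vertex `i` (and `par i = 0` when `i` is a root).  The condition `nested` says
exactly that the function arises from the preorder traversal labeling of an ordered forest:
the vertices strictly between `par i` and `i` all lie in the subtree interval below `par i`.
Values outside `[1, n]` are normalized to `0`, so that two ordered forests are equal iff
their parent functions are equal. -/
structure OForest (n : ℕ) where
  par : ℕ → ℕ
  par_lt : ∀ i, 1 ≤ i → i ≤ n → par i < i
  nested : ∀ i k, 1 ≤ i → i ≤ n → par i < k → k < i → par i ≤ par k
  par_out : ∀ i, i = 0 ∨ n < i → par i = 0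

/-- Auxiliary construction for the operation on a non-leaf vertex `v`:
the rightmost child `v'` of `v` is reattached to the parent of `v`. -/
def OForest.mkOp {n : ℕ} (F : OForest n) (v : ℕ) (hv : 1 ≤ v)
    (hne : ((Finset.Icc 1 n).filter fun i => F.par i = v).Nonempty) : OForest n where
  par i := if i = ((Finset.Icc 1 n).filter fun i => F.par i = v).max' hne then F.par v
           else F.par i
  par_lt := by
    set v' := ((Finset.Icc 1 n).filter fun i => F.par i = v).max' hne with hv'def
    have hmem := Finset.max'_mem _ hne
    rw [← hv'def] at hmem
    simp only [Finset.mem_filter, Finset.mem_Icc] at hmem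
    obtain ⟨⟨hv'1, hv'n⟩, hpar⟩ := hmem
    have hvlt : v < v' := hpar ▸ F.par_lt v' hv'1 hv'n
    have hvn : v ≤ n := le_trans hvlt.le hv'n
    have hpv : F.par v < v := F.par_lt v hv hvn
    intro i h1 h2
    try dsimp only
    by_cases hi : i = v'
    · subst hi; rw [if_pos rfl]; omega
    · rw [if_neg hi]; exact F.par_lt i h1 h2
  nested := by
    set v' := ((Finset.Icc 1 n).filter fun i => F.par i = v).max' hne with hv'def
    have hmem := Finset.max'_mem _ hne
    rw [← hv'def] at hmem
    simp only [Finset.mem_filter, Finset.mem_Icc] at hmem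
    obtain ⟨⟨hv'1, hv'n⟩, hpar⟩ := hmem
    have hvlt : v < v' := hpar ▸ F.par_lt v' hv'1 hv'n
    have hvn : v ≤ n := le_trans hvlt.le hv'n
    have hpv : F.par v < v := F.par_lt v hv hvn
    intro i k h1 h2 h3 h4
    try dsimp only at h3 ⊢
    by_cases hi : i = v'
    · subst hi
      rw [if_pos rfl] at h3 ⊢
      rw [if_neg (by omega : ¬ k = v')]
      by_cases hkv : k = v
      · subst hkv; exact le_refl _
      · by_cases hk2 : k < v
        · exact F.nested v k hv hvn h3 hk2
        · have hvk : v < k := by omega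
          have hnk := F.nested v' k hv'1 hv'n (by rw [hpar]; exact hvk) h4
          rw [hpar] at hnk
          omega
    · rw [if_neg hi] at h3 ⊢
      by_cases hk : k = v'
      · subst hk
        rw [if_pos rfl]
        have h5 : F.par i ≤ v := by
          have hni := F.nested i v' h1 h2 h3 h4
          rw [hpar] at hni; exact hni
        rcases lt_or_eq_of_le h5 with h6 | h6
        · exact F.nested i v h1 h2 h6 (by omega)
        · exfalso
          have hiC : i ∈ (Finset.Icc 1 n).filter fun j => F.par j = v :=
            Finset.mem_filter.2 ⟨Finset.mem_Icc.2 ⟨h1, h2⟩, h6⟩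
          have := Finset.le_max' _ i hiC
          omega
      · rw [if_neg hk]; exact F.nested i k h1 h2 h3 h4
  par_out := by
    set v' := ((Finset.Icc 1 n).filter fun i => F.par i = v).max' hne with hv'def
    have hmem := Finset.max'_mem _ hne
    rw [← hv'def] at hmem
    simp only [Finset.mem_filter, Finset.mem_Icc] at hmem
    obtain ⟨⟨hv'1, hv'n⟩, hpar⟩ := hmem
    intro i hi
    try dsimp only
    by_cases h' : i = v'
    · subst h'; exact absurd hi (by omega)
    · rw [if_neg h']; exact F.par_out i hi

/-- The operation on vertex `v` of `F`. -/
def OForest.op {n : ℕ} (F : OForest n) (v : ℕ) : OForest n :=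
  if h : 1 ≤ v ∧ ((Finset.Icc 1 n).filter fun i => F.par i = v).Nonempty then
    F.mkOp v h.1 h.2
  else F

/-- Vertex `v` is a non-leaf vertex of `F`: it is a vertex in `[1, n]` having a child. -/
def OForest.NonLeaf {n : ℕ} (F : OForest n) (v : ℕ) : Prop :=
  1 ≤ v ∧ v ≤ n ∧ ∃ i, 1 ≤ i ∧ i ≤ n ∧ F.par i = v

/-- The covering relation on ordered forests: `F` covers `G` iff `G = F.op v` for a
non-leaf vertex `v` of `F`. -/
def OForest.CovRel {n : ℕ} (F G : OForest n) : Prop :=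
  ∃ v, F.NonLeaf v ∧ G = F.op v

/-- The partial order on ordered forests on `n` vertices: the reflexive-transitive closure
of the relations `F ≥ F.op v` over non-leaf vertices `v`. -/
def OForest.le {n : ℕ} (G F : OForest n) : Prop :=
  Relation.ReflTransGen (fun A B : OForest n => A.CovRel B) F G

/-- The path tree: the maximal element of the Tamari lattice, in which vertex `t + 1` is the
unique child of vertex `t` for each `t < n`. -/
def pathForest (n : ℕ) : OForest n where
  par i := if 1 ≤ i ∧ i ≤ n then i - 1 else 0
  par_lt := by intro i h1 h2; simp only [if_pos (And.intro h1 h2)]; omega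
  nested := by
    intro i k h1 h2 h3 h4
    try dsimp only at h3 ⊢
    rw [if_pos (And.intro h1 h2)] at h3 ⊢
    split <;> omega
  par_out := by intro i h; (try dsimp only); split <;> omega


/-- The trajectory obtained from the path tree by, at each step `t = 1, 2, …`, operating on
the vertices of `S t` one at a time in increasing order of label. -/
def trajOfSets (n : ℕ) (S : ℕ → Finset ℕ) : ℕ → OForest n
  | 0 => pathForest n
  | t + 1 => (((S (t + 1)).sort (· ≤ ·)).foldl (fun A i => A.op i) (trajOfSets n S t))

/-- `j` has not yet been operated on strictly before point `(t, m)`: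
not in any `S s` for `1 ≤ s < t`, and if in `S t` then `j > m` (not yet processed
within round `t`, where vertices are processed in increasing order). -/
def Uat (S : ℕ → Finset ℕ) (t m j : ℕ) : Prop :=
  (∀ s, 1 ≤ s → s < t → j ∉ S s) ∧ (j ∈ S t → m < j)

/-- The invariant: every not-yet-operated vertex has as parent the largest
not-yet-operated vertex below it. -/
def TamariInv (n : ℕ) (S : ℕ → Finset ℕ) (F : OForest n) (t m : ℕ) : Prop :=
  ∀ v, 1 ≤ v → v ≤ n →
    (∀ j, Uat S t m j → F.par v < j → j < v → False) ∧
    (Uat S t m v → Uat S t m (F.par v))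

lemma op_par_of_le {n : ℕ} (F : OForest n) (v i : ℕ) (h : i ≤ v) :
    (F.op v).par i = F.par i := by
  unfold OForest.op
  split_ifs with hc
  · show (if i = ((Finset.Icc 1 n).filter fun j => F.par j = v).max' hc.2 then F.par v
      else F.par i) = F.par i
    have hmem := Finset.max'_mem _ hc.2
    simp only [Finset.mem_filter, Finset.mem_Icc] at hmem
    have hlt : v < ((Finset.Icc 1 n).filter fun j => F.par j = v).max' hc.2 := by
      have := F.par_lt _ hmem.1.1 hmem.1.2
      omega
    rw [if_neg (by omega)]
  · rfl

lemma foldl_par_of_le {n : ℕ} (L : List ℕ) (F : OForest n) (i : ℕ)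
    (h : ∀ b ∈ L, i ≤ b) :
    (L.foldl (fun A j => A.op j) F).par i = F.par i := by
  induction L generalizing F with
  | nil => rfl
  | cons a L ih =>
    rw [List.foldl_cons, ih _ (fun b hb => h b (List.mem_cons_of_mem a hb)),
      op_par_of_le F a i (h a List.mem_cons_self)]

lemma inv_step {n : ℕ} {S : ℕ → Finset ℕ} (hS : ∀ t, S t ⊆ Finset.Icc 1 n)
    (F : OForest n) (t m a : ℕ) (ha : a ∈ S t) (hma : m < a)
    (hgap : ∀ j ∈ S t, m < j → a ≤ j) (hinv : TamariInv n S F t m) :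
    TamariInv n S (F.op a) t a := by
  have ha1 : 1 ≤ a := (Finset.mem_Icc.1 (hS t ha)).1
  have han : a ≤ n := (Finset.mem_Icc.1 (hS t ha)).2
  have hUa : ∀ j, Uat S t a j → Uat S t m j := by
    intro j hj
    exact ⟨hj.1, fun hjS => lt_trans hma (hj.2 hjS)⟩
  have hUne : ∀ j, Uat S t a j → j ≠ a := by
    intro j hj hje; subst hje; exact absurd (hj.2 ha) (lt_irrefl _)
  have hUba : ∀ j, Uat S t m j → j ≠ a → Uat S t a j := by
    intro j hj hne
    refine ⟨hj.1, fun hjS => ?_⟩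
    have := hgap j hjS (hj.2 hjS)
    omega
  unfold OForest.op
  split_ifs with hc
  · -- a has a child; v' is its rightmost child
    have hparEq : ∀ i, (F.mkOp a hc.1 hc.2).par i =
        if i = ((Finset.Icc 1 n).filter fun j => F.par j = a).max' hc.2 then F.par a
        else F.par i := fun i => rfl
    set v' := ((Finset.Icc 1 n).filter fun j => F.par j = a).max' hc.2 with hv'def
    have hmem := Finset.max'_mem _ hc.2
    rw [← hv'def] at hmem
    simp only [Finset.mem_filter, Finset.mem_Icc] at hmem
    obtain ⟨⟨hv'1, hv'n⟩, hv'par⟩ := hmem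
    have hav' : a < v' := by have := F.par_lt v' hv'1 hv'n; omega
    have hmax : ∀ c, 1 ≤ c → c ≤ n → F.par c = a → c ≤ v' := by
      intro c h1 h2 h3
      exact Finset.le_max' ((Finset.Icc 1 n).filter fun i => F.par i = a) c
        (Finset.mem_filter.2 ⟨Finset.mem_Icc.2 ⟨h1, h2⟩, h3⟩)
    intro v hv1 hvn
    constructor
    · intro j hj hlt1 hlt2
      rw [hparEq] at hlt1
      have hjm := hUa j hj
      have hjne := hUne j hj
      by_cases hvv' : v = v'
      · subst hvv'
        rw [if_pos rfl] at hlt1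
        -- F.par a < j < v', j ≠ a
        have h1 := (hinv a ha1 han).1 j hjm hlt1
        have h2 := (hinv v' hv'1 hv'n).1 j hjm
        rw [hv'par] at h2
        have hja : ¬ j < a := fun hja => h1 hja
        exact h2 (by omega) hlt2
      · rw [if_neg hvv'] at hlt1
        exact (hinv v hv1 hvn).1 j hjm hlt1 hlt2
    · intro hvU
      rw [hparEq]
      have hvUm := hUa v hvU
      by_cases hvv' : v = v'
      · subst hvv'
        rw [if_pos rfl]
        -- Uat t m a holds, since par v' = a and v' ∈ U
        have haU : Uat S t m a := by
          have := (hinv v' hv'1 hv'n).2 hvUm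
          rwa [hv'par] at this
        have hpaU := (hinv a ha1 han).2 haU
        have hpa_lt : F.par a < a := F.par_lt a ha1 han
        exact hUba _ hpaU (by omega)
      · rw [if_neg hvv']
        have hpvU := (hinv v hv1 hvn).2 hvUm
        refine hUba _ hpvU ?_
        intro hpva
        -- F.par v = a : v is a child of a, v < v', contradiction with (a) for v'
        have hvle := hmax v hv1 hvn hpva
        have hvlt : v < v' := by omega
        have hav : a < v := by have := F.par_lt v hv1 hvn; omega
        exact (hinv v' hv'1 hv'n).1 v hvUm (by rw [hv'par]; exact hav) hvlt
  · -- no-op: a has no child (given 1 ≤ a)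
    intro v hv1 hvn
    constructor
    · intro j hj hlt1 hlt2
      exact (hinv v hv1 hvn).1 j (hUa j hj) hlt1 hlt2
    · intro hvU
      have hpvU := (hinv v hv1 hvn).2 (hUa v hvU)
      refine hUba _ hpvU ?_
      intro hpva
      exact hc ⟨ha1, ⟨v, Finset.mem_filter.2 ⟨Finset.mem_Icc.2 ⟨hv1, hvn⟩, hpva⟩⟩⟩

lemma inv_mono {n : ℕ} {S : ℕ → Finset ℕ} (F : OForest n) (t m M : ℕ)
    (hmM : m ≤ M) (hgap : ∀ j ∈ S t, m < j → M < j) (hinv : TamariInv n S F t m) :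
    TamariInv n S F t M := by
  have hUa : ∀ j, Uat S t M j → Uat S t m j := by
    intro j hj
    exact ⟨hj.1, fun hjS => by have := hj.2 hjS; omega⟩
  intro v hv1 hvn
  constructor
  · intro j hj hlt1 hlt2
    exact (hinv v hv1 hvn).1 j (hUa j hj) hlt1 hlt2
  · intro hvU
    have hpvU := (hinv v hv1 hvn).2 (hUa v hvU)
    refine ⟨hpvU.1, fun hjS => ?_⟩
    have h2 := hpvU.2 hjS
    have := hgap _ hjS h2
    omega

lemma inv_fold {n : ℕ} {S : ℕ → Finset ℕ} (hS : ∀ t, S t ⊆ Finset.Icc 1 n)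
    (t : ℕ) :
    ∀ (L : List ℕ) (F : OForest n) (m M : ℕ), List.Pairwise (· < ·) L →
    (∀ a ∈ L, a ∈ S t) → (∀ a ∈ L, m < a) → (∀ a ∈ L, a ≤ M) → m ≤ M →
    (∀ j ∈ S t, m < j → j ≤ M → j ∈ L) → TamariInv n S F t m →
    TamariInv n S (L.foldl (fun A i => A.op i) F) t M := by
  intro L
  induction L with
  | nil =>
    intro F m M _ _ _ _ hmM hcompl hinv
    exact inv_mono F t m M hmM
      (fun j hj hmj => by
        by_contra h
        exact absurd (hcompl j hj hmj (by omega)) (List.not_mem_nil)) hinv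
  | cons a L ih =>
    intro F m M hsort hmem hm hM hmM hcompl hinv
    rw [List.foldl_cons]
    have haS : a ∈ S t := hmem a List.mem_cons_self
    have hma : m < a := hm a List.mem_cons_self
    have haM : a ≤ M := hM a List.mem_cons_self
    have hsorted_tail : List.Pairwise (· < ·) L := hsort.of_cons
    have hlt : ∀ b ∈ L, a < b := fun b hb => List.rel_of_pairwise_cons hsort hb
    have hgap : ∀ j ∈ S t, m < j → a ≤ j := by
      intro j hj hmj
      by_cases hjM : j ≤ M
      · rcases List.mem_cons.1 (hcompl j hj hmj hjM) with h | h
        · omega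
        · exact le_of_lt (hlt j h)
      · omega
    have hstep := inv_step hS F t m a haS hma hgap hinv
    exact ih (F.op a) a M hsorted_tail
      (fun b hb => hmem b (List.mem_cons_of_mem a hb))
      (fun b hb => hlt b hb)
      (fun b hb => hM b (List.mem_cons_of_mem a hb)) haM
      (fun j hj haj hjM => by
        rcases List.mem_cons.1 (hcompl j hj (by omega) hjM) with h | h
        · omega
        · exact h) hstep

lemma inv_transfer {n : ℕ} {S : ℕ → Finset ℕ} (hS : ∀ t, S t ⊆ Finset.Icc 1 n)
    (F : OForest n) (t : ℕ) (hinv : TamariInv n S F (t + 1) n) :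
    TamariInv n S F (t + 2) 0 := by
  have hU : ∀ j, Uat S (t + 2) 0 j ↔ Uat S (t + 1) n j := by
    intro j
    constructor
    · intro ⟨h1, _⟩
      refine ⟨fun s hs1 hs2 => h1 s hs1 (by omega), fun hj => ?_⟩
      exact absurd hj (h1 (t + 1) (by omega) (by omega))
    · intro ⟨h1, h2⟩
      have hj1 : j ∉ S (t + 1) := by
        intro hj
        have := (Finset.mem_Icc.1 (hS _ hj)).2
        have := h2 hj
        omega
      refine ⟨fun s hs1 hs2 => ?_, fun hj => (Finset.mem_Icc.1 (hS _ hj)).1⟩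
      by_cases hst : s < t + 1
      · exact h1 s hs1 hst
      · have : s = t + 1 := by omega
        rw [this]; exact hj1
  intro v hv1 hvn
  constructor
  · intro j hj hlt1 hlt2
    exact (hinv v hv1 hvn).1 j ((hU j).1 hj) hlt1 hlt2
  · intro hvU
    exact (hU _).2 ((hinv v hv1 hvn).2 ((hU v).1 hvU))

lemma inv_traj {n : ℕ} {S : ℕ → Finset ℕ} (hS : ∀ t, S t ⊆ Finset.Icc 1 n) :
    ∀ t, TamariInv n S (trajOfSets n S t) (t + 1) 0 := by
  intro t
  induction t with
  | zero =>
    intro v hv1 hvn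
    have hUall : ∀ j, Uat S 1 0 j := by
      intro j
      exact ⟨fun s hs1 hs2 => absurd hs2 (by omega),
        fun hj => (Finset.mem_Icc.1 (hS _ hj)).1⟩
    constructor
    · intro j _ hlt1 hlt2
      have : (trajOfSets n S 0).par v = v - 1 := by
        show (pathForest n).par v = v - 1
        show (if 1 ≤ v ∧ v ≤ n then v - 1 else 0) = v - 1
        rw [if_pos ⟨hv1, hvn⟩]
      omega
    · intro _
      exact hUall _
  | succ t ih =>
    have hfold : trajOfSets n S (t + 1) =
        ((S (t + 1)).sort (· ≤ ·)).foldl (fun A i => A.op i) (trajOfSets n S t) := rfl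
    rw [hfold]
    refine inv_transfer hS _ t ?_
    refine inv_fold hS (t + 1) _ _ 0 n (Finset.sortedLT_sort _).pairwise ?_ ?_ ?_ (by omega) ?_ ih
    · intro a hamem
      exact (Finset.mem_sort _).1 hamem
    · intro a hamem
      exact (Finset.mem_Icc.1 (hS _ ((Finset.mem_sort _).1 hamem))).1
    · intro a hamem
      exact (Finset.mem_Icc.1 (hS _ ((Finset.mem_sort _).1 hamem))).2
    · intro j hj _ _
      exact (Finset.mem_sort _).2 hj

lemma final_aux (n : ℕ) (S : ℕ → Finset ℕ) (hS : ∀ t, S t ⊆ Finset.Icc 1 n)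
    (k l t : ℕ) (hk : 1 ≤ k) (hkl : k < l) (hln : l ≤ n) (ht : 1 ≤ t)
    (hlin : l ∈ S t) (hlfirst : ∀ s, 1 ≤ s → s < t → l ∉ S s)
    (hknot : ∀ s, 1 ≤ s → s ≤ t → k ∉ S s)
    (hbetween : ∀ i, k < i → i < l → ∃ s, 1 ≤ s ∧ s ≤ t ∧ i ∈ S s) :
    ∀ (L : List ℕ) (F : OForest n) (m : ℕ), List.Pairwise (· < ·) L →
    (∀ a ∈ L, a ∈ S t) → (∀ a ∈ L, m < a) → (∀ j ∈ S t, m < j → j ∈ L) →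
    TamariInv n S F t m → m < l →
    (L.foldl (fun A i => A.op i) F).par l = k := by
  intro L
  induction L with
  | nil =>
    intro F m _ _ _ hcompl _ hml
    exact absurd (hcompl l hlin hml) (List.not_mem_nil)
  | cons a L ih =>
    intro F m hsort hmem hm hcompl hinv hml
    rw [List.foldl_cons]
    have haS : a ∈ S t := hmem a List.mem_cons_self
    have hma : m < a := hm a List.mem_cons_self
    have hlt : ∀ b ∈ L, a < b := fun b hb => List.rel_of_pairwise_cons hsort hb
    by_cases hal : a < l
    · have hgap : ∀ j ∈ S t, m < j → a ≤ j := by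
        intro j hj hmj
        rcases List.mem_cons.1 (hcompl j hj hmj) with h | h
        · omega
        · exact le_of_lt (hlt j h)
      have hstep := inv_step hS F t m a haS hma hgap hinv
      exact ih (F.op a) a hsort.of_cons
        (fun b hb => hmem b (List.mem_cons_of_mem a hb))
        (fun b hb => hlt b hb)
        (fun j hj haj => by
          rcases List.mem_cons.1 (hcompl j hj (by omega)) with h | h
          · omega
          · exact h) hstep hal
    · -- all elements of a :: L are ≥ l: the fold does not change par l
      push_neg at hal
      have hfix : (L.foldl (fun A i => A.op i) (F.op a)).par l = F.par l := by
        rw [foldl_par_of_le L (F.op a) l (fun b hb => by have := hlt b hb; omega),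
          op_par_of_le F a l hal]
      rw [hfix]
      -- now deduce F.par l = k from the invariant
      have hUl : Uat S t m l := ⟨hlfirst, fun _ => hml⟩
      have hUk : Uat S t m k :=
        ⟨fun s hs1 hs2 => hknot s hs1 (by omega),
          fun hkS => absurd hkS (hknot t ht (le_refl t))⟩
      obtain ⟨hA, hB⟩ := hinv l (by omega) hln
      have hUp := hB hUl
      have hplt : F.par l < l := F.par_lt l (by omega) hln
      have hge : k ≤ F.par l := by
        by_contra h
        exact hA k hUk (by omega) hkl
      rcases eq_or_lt_of_le hge with h | h
      · omega
      · exfalso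
        obtain ⟨s, hs1, hs2, hsin⟩ := hbetween (F.par l) h hplt
        rcases lt_or_eq_of_le hs2 with hst | hst
        · exact hUp.1 s hs1 hst hsin
        · subst hst
          have hmi : m < F.par l := hUp.2 hsin
          rcases List.mem_cons.1 (hcompl (F.par l) hsin hmi) with hh | hh
          · omega
          · have := hlt _ hh; omega

/-- Let `S_1, S_2, …` be subsets of `[n]` and apply the corresponding operations to the path
tree.  For vertices `k < l`, if `h_l` is the first time `l` is operated on, `k` is not
operated on at any time `≤ h_l`, and every vertex strictly between `k` and `l` is operated
on at some time `≤ h_l`, then after `h_l` moves the vertex `l` is a child of the vertex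
`k`. -/

theorem thm15 (n : ℕ) (S : ℕ → Finset ℕ) (hS : ∀ t, S t ⊆ Finset.Icc 1 n)
    (k l hl : ℕ) (hk : 1 ≤ k) (hkl : k < l) (hln : l ≤ n) (hhl : 1 ≤ hl)
    (hlin : l ∈ S hl) (hlfirst : ∀ t, 1 ≤ t → t < hl → l ∉ S t)
    (hknot : ∀ t, 1 ≤ t → t ≤ hl → k ∉ S t)
    (hbetween : ∀ i, k < i → i < l → ∃ t, 1 ≤ t ∧ t ≤ hl ∧ i ∈ S t) :
    (trajOfSets n S hl).par l = k := by
  obtain ⟨u, rfl⟩ : ∃ u, hl = u + 1 := ⟨hl - 1, by omega⟩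
  have hinv := inv_traj hS u
  have hfold : trajOfSets n S (u + 1) =
      ((S (u + 1)).sort (· ≤ ·)).foldl (fun A i => A.op i) (trajOfSets n S u) := rfl
  rw [hfold]
  refine final_aux n S hS k l (u + 1) hk hkl hln hhl hlin hlfirst hknot hbetween
    _ _ 0 (Finset.sortedLT_sort _).pairwise ?_ ?_ ?_ hinv (by omega)
  · intro a hamem; exact (Finset.mem_sort _).1 hamem
  · intro a hamem
    exact (Finset.mem_Icc.1 (hS _ ((Finset.mem_sort _).1 hamem))).1
  · intro j hj _; exact (Finset.mem_sort _).2 hj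

end
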